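/- Let (X,T) be a topological dynamical system and x ∈ X. The following are equivalent: (1) x is a distal point; (2) x is product recurrent, i.e. for every t.d.s. (Y,S) and every recurrent point y ∈ Y, the pair (x,y) is a recurrent point of the product system (X×Y, T×S); (3) for every t.d.s. (Y,S) and every minimal point y ∈ Y, the pair (x,y) is a minimal point of the product system (X×Y, T×S); (4) x is IP*-recurrent, i.e. N(x,U) is an IP* set for every neighborhood U of x. -/

import Mathlib

open Set Filter Topology Function

namespace PaperFormal

/-- The return-time set `N(x,U) = {n ∈ ℤ₊ : Tⁿ x ∈ U}`. -/
def retTimes {X : Type} (T : X → X) (x : X) (U : Set X) : Set ℕ :=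
  {n : ℕ | T^[n] x ∈ U}

/-- A point is recurrent if `N(x,U)` is infinite for every neighborhood `U` of `x`. -/
def RecurrentPt {X : Type} [TopologicalSpace X] (T : X → X) (x : X) : Prop :=
  ∀ U ∈ nhds x, (retTimes T x U).Infinite

/-- The (forward) orbit closure of a point. -/
def orbitClosure {X : Type} [TopologicalSpace X] (T : X → X) (x : X) : Set X :=
  closure (Set.range fun n : ℕ => T^[n] x)

/-- A pair `(x,y)` is proximal if `lim T^{nᵢ} x = lim T^{nᵢ} y` along some sequence `nᵢ`. -/
def ProximalPair {X : Type} [TopologicalSpace X] (T : X → X) (x y : X) : Prop :=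
  ∃ (u : ℕ → ℕ) (z : X),
    Tendsto (fun i => T^[u i] x) atTop (nhds z) ∧
    Tendsto (fun i => T^[u i] y) atTop (nhds z)

/-- A point `x` is distal if every `y` in its orbit closure proximal to `x` equals `x`. -/
def DistalPt {X : Type} [TopologicalSpace X] (T : X → X) (x : X) : Prop :=
  ∀ y ∈ orbitClosure T x, ProximalPair T x y → y = x

/-- `A` is a minimal set: nonempty, closed, invariant, with no proper such subset. -/
def IsMinimalSet {X : Type} [TopologicalSpace X] (T : X → X) (A : Set X) : Prop :=
  A.Nonempty ∧ IsClosed A ∧ Set.MapsTo T A A ∧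
    ∀ B ⊆ A, B.Nonempty → IsClosed B → Set.MapsTo T B B → B = A

/-- A point is minimal (almost periodic) if its orbit closure is a minimal set. -/
def IsMinimalPt {X : Type} [TopologicalSpace X] (T : X → X) (x : X) : Prop :=
  IsMinimalSet T (orbitClosure T x)

/-- A minimal system: no proper nonempty closed invariant subset. -/
def MinimalSys {X : Type} [TopologicalSpace X] (T : X → X) : Prop :=
  ∀ B : Set X, B.Nonempty → IsClosed B → Set.MapsTo T B B → B = Set.univ

/-- A transitive system: `N(U,V)` is infinite for all opene `U`, `V`. -/
def TransitiveSys {X : Type} [TopologicalSpace X] (T : X → X) : Prop :=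
  ∀ U V : Set X, IsOpen U → IsOpen V → U.Nonempty → V.Nonempty →
    {n : ℕ | (U ∩ T^[n] ⁻¹' V).Nonempty}.Infinite

/-- Transitivity of the subsystem on an invariant subset `A` (relative open sets). -/
def TransitiveOn {X : Type} [TopologicalSpace X] (T : X → X) (A : Set X) : Prop :=
  ∀ U V : Set X, IsOpen U → IsOpen V → (U ∩ A).Nonempty → (V ∩ A).Nonempty →
    {n : ℕ | (U ∩ A ∩ T^[n] ⁻¹' V).Nonempty}.Infinite

/-- A transitive point: a point with dense forward orbit. -/
def TransPt {X : Type} [TopologicalSpace X] (T : X → X) (x : X) : Prop :=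
  Dense (Set.range fun n : ℕ => T^[n] x)

/-- Finite sums of the sequence `p` over nonempty finite index sets contained in `[n,∞)`. -/
def FSfrom (p : ℕ → ℕ) (n : ℕ) : Set ℕ :=
  {m | ∃ α : Finset ℕ, α.Nonempty ∧ (∀ i ∈ α, n ≤ i) ∧ m = ∑ i ∈ α, p i}

/-- Finite sums of the sequence `p` over nonempty finite index sets. -/
def FS (p : ℕ → ℕ) : Set ℕ := FSfrom p 0

/-- An IP set: a set containing all finite sums of some sequence of natural numbers. -/
def IPSet (A : Set ℕ) : Prop :=
  ∃ p : ℕ → ℕ, (∀ i, 0 < p i) ∧ FS p ⊆ A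

/-- An IP* set: a set meeting every IP set. -/
def IPStar (A : Set ℕ) : Prop :=
  ∀ B : Set ℕ, IPSet B → (A ∩ B).Nonempty

/-- A syndetic set: a set with bounded gaps. -/
def Syndetic (S : Set ℕ) : Prop :=
  ∃ N : ℕ, ∀ m : ℕ, ∃ k ∈ S, m ≤ k ∧ k ≤ m + N

/-- A thick set: a set containing arbitrarily long runs of consecutive integers. -/
def Thick (S : Set ℕ) : Prop :=
  ∀ n : ℕ, ∃ m : ℕ, ∀ i ≤ n, m + i ∈ S

/-- A piecewise syndetic set: an intersection of a syndetic set with a thick set. -/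
def PiecewiseSyndetic (A : Set ℕ) : Prop :=
  ∃ S₁ S₂ : Set ℕ, Syndetic S₁ ∧ Thick S₂ ∧ A = S₁ ∩ S₂

/-- A thickly syndetic set: a set meeting every piecewise syndetic set. -/
def ThicklySyndetic (A : Set ℕ) : Prop :=
  ∀ B : Set ℕ, PiecewiseSyndetic B → (A ∩ B).Nonempty

/-- `x` is `F`-recurrent for the family `F` if `N(x,U) ∈ F` for every neighborhood `U`. -/
def FRecurrentPt {X : Type} [TopologicalSpace X] (F : Set (Set ℕ)) (T : X → X) (x : X) :
    Prop :=
  ∀ U ∈ nhds x, retTimes T x U ∈ F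

/-- `x` is `F`-product recurrent: `(x,y)` is recurrent for every `F`-recurrent point `y`
in any topological dynamical system `(Y,S)`. -/
def FProductRecurrent {X : Type} [TopologicalSpace X] (F : Set (Set ℕ)) (T : X → X)
    (x : X) : Prop :=
  ∀ (Y : Type) [MetricSpace Y] [CompactSpace Y] (S : Y → Y),
    Continuous S → Function.Surjective S →
      ∀ y : Y, FRecurrentPt F S y → RecurrentPt (Prod.map T S) (x, y)

/-- A joining of `(X,T)` and `(Y,S)`: a nonempty closed invariant subset of `X × Y`
projecting onto both coordinates. -/
def Joining {X Y : Type} [TopologicalSpace X] [TopologicalSpace Y]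
    (T : X → X) (S : Y → Y) (J : Set (X × Y)) : Prop :=
  J.Nonempty ∧ IsClosed J ∧ Set.MapsTo (Prod.map T S) J J ∧
    Prod.fst '' J = Set.univ ∧ Prod.snd '' J = Set.univ

/-- Two systems are disjoint if their only joining is the full product. -/
def DisjointSys {X Y : Type} [TopologicalSpace X] [TopologicalSpace Y]
    (T : X → X) (S : Y → Y) : Prop :=
  ∀ J : Set (X × Y), Joining T S J → J = Set.univ

/-- Property (★) of a point: for each neighborhood `V` of `x` there is `n` such that for
every finite set `S` whose distinct elements are at distance `≥ n`, some common shift `ℓ`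
puts all of `T^{s+ℓ} x`, `s ∈ S`, inside `V`. -/
def StarProp {X : Type} [TopologicalSpace X] (T : X → X) (x : X) : Prop :=
  ∀ V ∈ nhds x, ∃ n : ℕ, ∀ S : Finset ℕ,
    (∀ s ∈ S, ∀ t ∈ S, s < t → n ≤ t - s) →
      ∃ ℓ : ℕ, ∀ s ∈ S, T^[s + ℓ] x ∈ V

/-- `F` is an independence set for the pair `(U₀, U₁)`. -/
def IndepSet {X : Type} (T : X → X) (U₀ U₁ : Set X) (F : Set ℕ) : Prop :=
  ∀ J : Finset ℕ, ↑J ⊆ F → J.Nonempty → ∀ s : ℕ → Bool,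
    (⋂ j ∈ J, T^[j] ⁻¹' (if s j then U₁ else U₀)).Nonempty

/-! ### Auxiliary machinery: the Ellis action of `βℕ` -/

set_option linter.unusedSectionVars false

attribute [local instance] Ultrafilter.add Ultrafilter.addSemigroup

noncomputable section

namespace Ellis

variable {X : Type} [TopologicalSpace X] [CompactSpace X] [T2Space X]

/-- The Ellis action of `βℕ` on a compact Hausdorff system. -/
noncomputable def act (T : X → X) (x : X) (p : Ultrafilter ℕ) : X :=
  Ultrafilter.extend (fun n => T^[n] x) p

theorem act_pure (T : X → X) (x : X) (n : ℕ) : act T x (pure n) = T^[n] x :=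
  congrFun (ultrafilter_extend_extends (fun n => T^[n] x)) n

theorem continuous_act (T : X → X) (x : X) : Continuous (act T x) :=
  continuous_ultrafilter_extend _

theorem act_tendsto (T : X → X) (x : X) (p : Ultrafilter ℕ) :
    ↑(p.map fun n => T^[n] x) ≤ nhds (act T x p) :=
  ultrafilter_extend_eq_iff.mp rfl

theorem mem_of_act {T : X → X} {x : X} {p : Ultrafilter ℕ} {U : Set X}
    (hU : U ∈ nhds (act T x p)) : {n | T^[n] x ∈ U} ∈ p :=
  act_tendsto T x p hU

theorem act_eq_of_tendsto {T : X → X} {x : X} {p : Ultrafilter ℕ} {c : X}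
    (h : ↑(p.map fun n => T^[n] x) ≤ nhds c) : act T x p = c :=
  ultrafilter_extend_eq_iff.mpr h

theorem act_mem_closure_image {T : X → X} {x : X} {p : Ultrafilter ℕ} {s : Set ℕ}
    (hs : s ∈ p) : act T x p ∈ closure ((fun n => T^[n] x) '' s) := by
  rw [mem_closure_iff_nhds]
  intro U hU
  have h1 : (fun n => T^[n] x) ⁻¹' U ∈ p := mem_of_act hU
  obtain ⟨n, hn1, hn2⟩ := Ultrafilter.nonempty_of_mem (Filter.inter_mem h1 hs)
  exact ⟨T^[n] x, hn1, Set.mem_image_of_mem _ hn2⟩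

theorem act_eq_extend_comp {T : X → X} {x : X} {g : ℕ → ℕ} (p : Ultrafilter ℕ) :
    act T x (p.map g) = Ultrafilter.extend (fun n => T^[g n] x) p := by
  apply act_eq_of_tendsto
  have := (ultrafilter_extend_eq_iff (f := fun n => T^[g n] x)
      (b := p) (c := Ultrafilter.extend (fun n => T^[g n] x) p)).mp rfl
  rwa [show ((p.map g).map fun n => T^[n] x) = p.map fun n => T^[g n] x from
    Ultrafilter.coe_inj.mp (by simp [Filter.map_map]; rfl)]

theorem comp_act {Z : Type} [TopologicalSpace Z] [CompactSpace Z] [T2Space Z]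
    {g : X → Z} (hg : Continuous g) (f : ℕ → X) (p : Ultrafilter ℕ) :
    g (Ultrafilter.extend f p) = Ultrafilter.extend (g ∘ f) p := by
  symm
  apply ultrafilter_extend_eq_iff.mpr
  have h : ↑(p.map f) ≤ nhds (Ultrafilter.extend f p) := ultrafilter_extend_eq_iff.mp rfl
  have h2 := (hg.tendsto _).comp (h : Filter.Tendsto f (↑p) _)
  have h3 : (↑(p.map (g ∘ f)) : Filter Z) = Filter.map (g ∘ f) (↑p : Filter ℕ) := rfl
  rw [h3]
  exact h2

theorem pure_add (m : ℕ) (q : Ultrafilter ℕ) : (pure m : Ultrafilter ℕ) + q = q.map (m + ·) := by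
  apply Ultrafilter.coe_inj.mp
  apply Filter.ext'
  intro p
  rw [Ultrafilter.eventually_add]
  simp

theorem pure_add_pure (m n : ℕ) : (pure m : Ultrafilter ℕ) + pure n = pure (m + n) := by
  apply Ultrafilter.coe_inj.mp
  apply Filter.ext'
  intro p
  rw [Ultrafilter.eventually_add]
  simp

theorem act_add {T : X → X} (hT : Continuous T) (x : X) (p q : Ultrafilter ℕ) :
    act T x (p + q) = act T (act T x q) p := by
  have hcT : ∀ m : ℕ, Continuous (T^[m]) := fun m => hT.iterate m
  have h1 : Continuous fun r : Ultrafilter ℕ => act T x (r + q) :=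
    (continuous_act T x).comp (Ultrafilter.continuous_add_left q)
  have h2 : Continuous fun r : Ultrafilter ℕ => act T (act T x q) r := continuous_act _ _
  have key : ∀ m : ℕ, act T x (pure m + q) = act T (act T x q) (pure m) := by
    intro m
    rw [pure_add, act_eq_extend_comp, act_pure]
    have : (fun n => T^[m + n] x) = (fun n => T^[m] (T^[n] x)) := by
      funext n; rw [Function.iterate_add_apply]
    rw [this, show (fun n => T^[m] (T^[n] x)) = T^[m] ∘ (fun n => T^[n] x) from rfl,
      ← comp_act (hcT m)]
    rfl
  have := denseRange_pure.equalizer h1 h2 (funext key)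
  exact congrFun this p

theorem T_act {T : X → X} (hT : Continuous T) (x : X) (p : Ultrafilter ℕ) :
    T (act T x p) = act T x (pure 1 + p) := by
  rw [act_add hT, act_pure]
  simp

end Ellis

end
namespace Ellis

variable {X : Type} [TopologicalSpace X] [CompactSpace X] [T2Space X]

theorem mem_orbitClosure_self (T : X → X) (x : X) : x ∈ orbitClosure T x :=
  subset_closure ⟨0, rfl⟩

theorem orbitClosure_isClosed (T : X → X) (x : X) : IsClosed (orbitClosure T x) :=
  isClosed_closure

theorem iterate_mem_orbitClosure (T : X → X) (x : X) (n : ℕ) :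
    T^[n] x ∈ orbitClosure T x := subset_closure ⟨n, rfl⟩

theorem mapsTo_orbitClosure {T : X → X} (hT : Continuous T) (x : X) :
    Set.MapsTo T (orbitClosure T x) (orbitClosure T x) := by
  intro w hw
  have h1 : T w ∈ closure (T '' Set.range fun n : ℕ => T^[n] x) :=
    image_closure_subset_closure_image hT (Set.mem_image_of_mem T hw)
  refine closure_mono ?_ h1
  rintro _ ⟨_, ⟨n, rfl⟩, rfl⟩
  exact ⟨n + 1, by simp only [Function.iterate_succ_apply']⟩

theorem orbitClosure_subset {T : X → X} {B : Set X} (hcl : IsClosed B)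
    (hB : Set.MapsTo T B B) {w : X} (hw : w ∈ B) : orbitClosure T w ⊆ B := by
  apply closure_minimal _ hcl
  rintro _ ⟨n, rfl⟩
  induction n with
  | zero => exact hw
  | succ n ih =>
    have : T^[n + 1] w = T (T^[n] w) := Function.iterate_succ_apply' T n w
    show (fun n => T^[n] w) (n + 1) ∈ B
    simpa only [this] using hB ih

theorem orbitClosure_eq_range_act {T : X → X} (hT : Continuous T) (x : X) :
    orbitClosure T x = Set.range (act T x) := by
  apply subset_antisymm
  · apply closure_minimal
    · rintro _ ⟨n, rfl⟩
      exact ⟨pure n, act_pure T x n⟩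
    · exact (isCompact_range (continuous_act T x)).isClosed
  · rintro _ ⟨p, rfl⟩
    have := act_mem_closure_image (T := T) (x := x) (p := p) Filter.univ_mem
    rwa [Set.image_univ] at this

theorem act_mem_orbitClosure {T : X → X} (hT : Continuous T) (x : X) (p : Ultrafilter ℕ) :
    act T x p ∈ orbitClosure T x := by
  rw [orbitClosure_eq_range_act hT]; exact ⟨p, rfl⟩

theorem isMinimalPt_iff {T : X → X} (hT : Continuous T) (z : X) :
    IsMinimalPt T z ↔ ∀ w ∈ orbitClosure T z, z ∈ orbitClosure T w := by
  constructor
  · rintro ⟨-, -, -, hmin⟩ w hw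
    have h1 : orbitClosure T w ⊆ orbitClosure T z :=
      orbitClosure_subset (orbitClosure_isClosed T z) (mapsTo_orbitClosure hT z) hw
    have h2 := hmin (orbitClosure T w) h1 ⟨w, mem_orbitClosure_self T w⟩
      (orbitClosure_isClosed T w) (mapsTo_orbitClosure hT w)
    rw [h2]
    exact mem_orbitClosure_self T z
  · intro H
    refine ⟨⟨z, mem_orbitClosure_self T z⟩, orbitClosure_isClosed T z,
      mapsTo_orbitClosure hT z, ?_⟩
    intro B hBsub ⟨w, hwB⟩ hBcl hBinv
    have hz : z ∈ B := orbitClosure_subset hBcl hBinv hwB (H w (hBsub hwB))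
    exact subset_antisymm hBsub (orbitClosure_subset hBcl hBinv hz)

end Ellis
namespace Ellis

/-- A nonempty closed left ideal of `βℕ`. -/
def IsCLI (L : Set (Ultrafilter ℕ)) : Prop :=
  L.Nonempty ∧ IsClosed L ∧ ∀ p : Ultrafilter ℕ, ∀ q ∈ L, p + q ∈ L

theorem isCLI_univ : IsCLI (Set.univ : Set (Ultrafilter ℕ)) :=
  ⟨⟨pure 0, trivial⟩, isClosed_univ, fun _ _ _ => trivial⟩

theorem isCLI_range_add (q : Ultrafilter ℕ) : IsCLI (Set.range (· + q)) := by
  refine ⟨⟨pure 0 + q, ⟨pure 0, rfl⟩⟩, ?_, ?_⟩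
  · have : Set.range (· + q) = (· + q) '' Set.univ := (Set.image_univ).symm
    rw [this]
    exact (isCompact_univ.image (Ultrafilter.continuous_add_left q)).isClosed
  · rintro p _ ⟨r, rfl⟩
    exact ⟨p + r, by dsimp only; rw [add_assoc]⟩

theorem exists_minimal_cli_subset {L₀ : Set (Ultrafilter ℕ)} (h : IsCLI L₀) :
    ∃ L, L ⊆ L₀ ∧ IsCLI L ∧ ∀ L', IsCLI L' → L' ⊆ L → L' = L := by
  let S : Set (Set (Ultrafilter ℕ)) := {L | IsCLI L ∧ L ⊆ L₀}
  have key : ∀ c ⊆ S, IsChain (· ⊆ ·) c → c.Nonempty →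
      ∃ lb ∈ S, ∀ s ∈ c, lb ⊆ s := by
    intro c hcS hchain hcne
    refine ⟨⋂₀ c, ⟨⟨?_, ?_, ?_⟩, ?_⟩, fun s hs => Set.sInter_subset_of_mem hs⟩
    · haveI : Nonempty c := hcne.coe_sort
      have := IsCompact.nonempty_iInter_of_directed_nonempty_isCompact_isClosed
        (fun i : c => (i : Set (Ultrafilter ℕ)))
        (DirectedOn.directed_val (IsChain.directedOn hchain.symm))
        (fun i => (hcS i.prop).1.1) (fun i => (hcS i.prop).1.2.1.isCompact)
        (fun i => (hcS i.prop).1.2.1)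
      rwa [Set.sInter_eq_iInter]
    · exact isClosed_sInter fun t ht => (hcS ht).1.2.1
    · intro p q hq
      rw [Set.mem_sInter] at hq ⊢
      exact fun t ht => (hcS ht).1.2.2 p q (hq t ht)
    · obtain ⟨t, ht⟩ := hcne
      exact (Set.sInter_subset_of_mem ht).trans (hcS ht).2
  obtain ⟨L, hLsub, hLmin⟩ := zorn_superset_nonempty S key L₀ ⟨h, subset_rfl⟩
  exact ⟨L, hLmin.prop.2, hLmin.prop.1, fun L' hL' hL'sub =>
    subset_antisymm hL'sub (hLmin.2 ⟨hL', hL'sub.trans hLmin.prop.2⟩ hL'sub)⟩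

theorem cli_minimal_absorb {L : Set (Ultrafilter ℕ)} (hL : IsCLI L)
    (hmin : ∀ L', IsCLI L' → L' ⊆ L → L' = L) {v : Ultrafilter ℕ} (hv : v ∈ L)
    {u : Ultrafilter ℕ} (hu : u ∈ L) : ∃ q, q + v = u := by
  have h1 : Set.range (· + v) ⊆ L := by
    rintro _ ⟨p, rfl⟩
    exact hL.2.2 p v hv
  have h2 := hmin _ (isCLI_range_add v) h1
  rw [← h2] at hu
  exact hu

variable {X : Type} [TopologicalSpace X] [CompactSpace X] [T2Space X]

theorem minimal_of_fixed_minIdem {T : X → X} (hT : Continuous T) {z : X}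
    {u : Ultrafilter ℕ} {L : Set (Ultrafilter ℕ)} (hL : IsCLI L)
    (hmin : ∀ L', IsCLI L' → L' ⊆ L → L' = L) (huL : u ∈ L)
    (hfix : act T z u = z) : IsMinimalPt T z := by
  rw [isMinimalPt_iff hT]
  intro w hw
  rw [orbitClosure_eq_range_act hT] at hw ⊢
  obtain ⟨p, rfl⟩ := hw
  obtain ⟨q, hq⟩ := cli_minimal_absorb hL hmin (hL.2.2 p u huL) huL
  refine ⟨q, ?_⟩
  have h1 : act T z p = act T z (p + u) := by rw [act_add hT, hfix]
  rw [h1, ← act_add hT, hq, hfix]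

theorem exists_minIdem_fixing {T : X → X} (hT : Continuous T) {y : X}
    (hy : IsMinimalPt T y) :
    ∃ L u, IsCLI L ∧ (∀ L', IsCLI L' → L' ⊆ L → L' = L) ∧ u ∈ L ∧
      u + u = u ∧ act T y u = y := by
  obtain ⟨L, -, hL, hmin⟩ := exists_minimal_cli_subset isCLI_univ
  have hKsub : (act T y) '' L ⊆ orbitClosure T y := by
    rintro _ ⟨p, -, rfl⟩
    exact act_mem_orbitClosure hT y p
  have hKcl : IsClosed ((act T y) '' L) :=
    (hL.2.1.isCompact.image (continuous_act T y)).isClosed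
  have hKinv : Set.MapsTo T ((act T y) '' L) ((act T y) '' L) := by
    rintro _ ⟨p, hp, rfl⟩
    exact ⟨pure 1 + p, hL.2.2 _ _ hp, (T_act hT y p).symm⟩
  have hKne : ((act T y) '' L).Nonempty := hL.1.image _
  have hK := hy.2.2.2 _ hKsub hKne hKcl hKinv
  have hyK : y ∈ (act T y) '' L := by rw [hK]; exact mem_orbitClosure_self T y
  obtain ⟨p₀, hp₀L, hp₀⟩ := hyK
  set A := L ∩ (act T y) ⁻¹' {y} with hA
  have hAne : A.Nonempty := ⟨p₀, hp₀L, by simp [hp₀]⟩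
  have hAcl : IsClosed A := hL.2.1.inter (isClosed_singleton.preimage (continuous_act T y))
  have hAadd : ∀ p ∈ A, ∀ q ∈ A, p + q ∈ A := by
    rintro p ⟨hpL, hpfix⟩ q ⟨hqL, hqfix⟩
    refine ⟨hL.2.2 p q hqL, ?_⟩
    simp only [Set.mem_preimage, Set.mem_singleton_iff] at hpfix hqfix ⊢
    rw [act_add hT, hqfix, hpfix]
  obtain ⟨u, huA, huidem⟩ := exists_idempotent_in_compact_add_subsemigroup
    Ultrafilter.continuous_add_left A hAne hAcl.isCompact hAadd
  exact ⟨L, u, hL, hmin, huA.1, huidem, huA.2⟩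

end Ellis
namespace Ellis

theorem ourFS_subset_hindman (p : ℕ → ℕ) : FS p ⊆ Hindman.FS (p : Stream' ℕ) := by
  rintro m ⟨α, hne, -, rfl⟩
  exact Hindman.FS.finset_sum (p : Stream' ℕ) α hne

theorem hindman_subset_ourFS {a : Stream' ℕ} {m : ℕ} (hm : m ∈ Hindman.FS a) :
    ∃ α : Finset ℕ, α.Nonempty ∧ m = ∑ i ∈ α, a.get i := by
  induction hm with
  | head' a => exact ⟨{0}, Finset.singleton_nonempty 0, by simp [Stream'.head]⟩
  | tail' a m h ih =>
    obtain ⟨α, hne, rfl⟩ := ih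
    refine ⟨α.image (· + 1), hne.image _, ?_⟩
    rw [Finset.sum_image (fun i _ j _ h => by omega)]
    rfl
  | cons' a m h ih =>
    obtain ⟨α, hne, rfl⟩ := ih
    refine ⟨insert 0 (α.image (· + 1)), Finset.insert_nonempty _ _, ?_⟩
    rw [Finset.sum_insert (by simp), Finset.sum_image (fun i _ j _ h => by omega)]
    rfl

theorem mem_of_ipstar_idem {A : Set ℕ} (h0 : 0 ∈ A) (hstar : IPStar A)
    {u : Ultrafilter ℕ} (hu : u + u = u) : A ∈ u := by
  by_contra hA
  have hAc : Aᶜ ∈ u := Ultrafilter.compl_mem_iff_notMem.mpr hA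
  have h0c : ({0} : Set ℕ)ᶜ ∈ u := by
    rw [Ultrafilter.compl_mem_iff_notMem]
    intro h
    obtain ⟨z, hz, rfl⟩ := Ultrafilter.eq_pure_of_finite_mem (Set.finite_singleton 0) h
    simp only [Set.mem_singleton_iff] at hz
    subst hz
    exact (Ultrafilter.mem_pure.mp hAc) h0
  obtain ⟨a, ha⟩ := Hindman.exists_FS_of_large u hu (Aᶜ ∩ {0}ᶜ)
    (Filter.inter_mem hAc h0c)
  have hpos : ∀ i, 0 < a.get i := by
    intro i
    have := ha (Hindman.FS.singleton a i)
    simpa [Nat.pos_iff_ne_zero] using this.2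
  have hip : IPSet (Aᶜ) := ⟨fun i => a.get i, hpos, fun m hm =>
    (ha (ourFS_subset_hindman _ hm)).1⟩
  obtain ⟨n, hn1, hn2⟩ := hstar _ hip
  exact hn2 hn1

variable {X : Type} [TopologicalSpace X] [CompactSpace X] [T2Space X]

theorem ipstar_fix {T : X → X} {x : X}
    (hx : ∀ U ∈ nhds x, IPStar (retTimes T x U))
    {u : Ultrafilter ℕ} (hu : u + u = u) : act T x u = x := by
  apply act_eq_of_tendsto
  intro U hU
  have h0 : (0 : ℕ) ∈ retTimes T x U := by
    show T^[0] x ∈ U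
    simpa using mem_of_mem_nhds hU
  exact mem_of_ipstar_idem h0 (hx U hU) hu

theorem act_idem_self {T : X → X} (hT : Continuous T) (x : X)
    {u : Ultrafilter ℕ} (hu : u + u = u) :
    act T (act T x u) u = act T x u := by
  rw [← act_add hT, hu]

end Ellis

namespace Ellis

variable {X : Type} [MetricSpace X] [CompactSpace X]

theorem proximal_act_idem {T : X → X} (hT : Continuous T) (x : X)
    {u : Ultrafilter ℕ} (hu : u + u = u) :
    ProximalPair T x (act T x u) := by
  set w := act T x u with hw
  have hfix : act T w u = w := act_idem_self hT x hu
  have hsel : ∀ i : ℕ, ∃ n : ℕ, T^[n] x ∈ Metric.ball w (1 / (i + 1)) ∧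
      T^[n] w ∈ Metric.ball w (1 / (i + 1)) := by
    intro i
    have h1 : {n | T^[n] x ∈ Metric.ball w (1 / (i + 1))} ∈ u := by
      apply mem_of_act
      rw [hw]
      exact Metric.ball_mem_nhds _ (by positivity)
    have h2 : {n | T^[n] w ∈ Metric.ball w (1 / (i + 1))} ∈ u := by
      apply mem_of_act (p := u)
      rw [hfix]
      exact Metric.ball_mem_nhds _ (by positivity)
    obtain ⟨n, hn1, hn2⟩ := Ultrafilter.nonempty_of_mem (Filter.inter_mem h1 h2)
    exact ⟨n, hn1, hn2⟩
  choose v hv1 hv2 using hsel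
  have hlim : Filter.Tendsto (fun i : ℕ => (1 : ℝ) / (i + 1)) Filter.atTop (nhds 0) :=
    tendsto_one_div_add_atTop_nhds_zero_nat
  have key : ∀ f : ℕ → X, (∀ i, dist (f i) w < 1 / (i + 1)) →
      Filter.Tendsto f Filter.atTop (nhds w) := by
    intro f hf
    rw [Metric.tendsto_atTop]
    intro ε hε
    obtain ⟨N, hN⟩ := Metric.tendsto_atTop.mp hlim ε hε
    refine ⟨N, fun i hi => lt_trans (hf i) ?_⟩
    have h3 := hN i hi
    rw [Real.dist_eq, sub_zero] at h3
    exact lt_of_le_of_lt (le_abs_self _) h3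
  exact ⟨v, w, key _ fun i => Metric.mem_ball.mp (hv1 i),
    key _ fun i => Metric.mem_ball.mp (hv2 i)⟩

end Ellis
namespace Ellis

theorem infinite_of_unbounded {s : Set ℕ} (h : ∀ M : ℕ, ∃ n ∈ s, M < n) : s.Infinite := by
  intro hf
  obtain ⟨M, hM⟩ := hf.bddAbove
  obtain ⟨n, hns, hn⟩ := h M
  exact absurd (hM hns) (by omega)

variable {X : Type} [MetricSpace X] [CompactSpace X]

theorem distal_fix {T : X → X} (hT : Continuous T) {x : X} (hx : DistalPt T x)
    {u : Ultrafilter ℕ} (hu : u + u = u) : act T x u = x :=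
  hx _ (act_mem_orbitClosure hT x u) (proximal_act_idem hT x hu)

theorem proximal_exists_ultra {T : X → X} {x y : X} (h : ProximalPair T x y) :
    ∃ p : Ultrafilter ℕ, act T x p = act T y p := by
  obtain ⟨v, z, h1, h2⟩ := h
  refine ⟨(Ultrafilter.of Filter.atTop).map v, ?_⟩
  have key : ∀ w : X, Filter.Tendsto (fun i => T^[v i] w) Filter.atTop (nhds z) →
      act T w ((Ultrafilter.of Filter.atTop).map v) = z := by
    intro w hw
    apply act_eq_of_tendsto
    have : ((Ultrafilter.of Filter.atTop).map v).map (fun n => T^[n] w)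
        = (Ultrafilter.of Filter.atTop).map (fun i => T^[v i] w) := by
      apply Ultrafilter.coe_inj.mp
      simp [Filter.map_map]
      rfl
    rw [this]
    exact hw.mono_left (Ultrafilter.of_le _)
  rw [key x h1, key y h2]

variable {Y : Type} [MetricSpace Y] [CompactSpace Y]

theorem act_prod (T : X → X) (S : Y → Y) (x : X) (y : Y) (p : Ultrafilter ℕ) :
    act (Prod.map T S) (x, y) p = (act T x p, act S y p) := by
  apply act_eq_of_tendsto
  have heq : (fun n => (Prod.map T S)^[n] (x, y)) = fun n => (T^[n] x, S^[n] y) := by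
    funext n
    rw [Prod.map_iterate]
    rfl
  rw [heq, nhds_prod_eq]
  exact Filter.Tendsto.prodMk (act_tendsto T x p) (act_tendsto S y p)

theorem minimalPt_recurrent {T : X → X} (hT : Continuous T) {z : X}
    (hz : IsMinimalPt T z) : RecurrentPt T z := by
  intro U hU
  apply infinite_of_unbounded
  intro M
  set B := closure (Set.range fun k : ℕ => T^[k + (M + 1)] z) with hB
  have hBsub : B ⊆ orbitClosure T z := closure_mono (by rintro _ ⟨k, rfl⟩; exact ⟨k + (M + 1), rfl⟩)
  have hBne : B.Nonempty := ⟨T^[M + 1] z, subset_closure ⟨0, by simp⟩⟩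
  have hBinv : Set.MapsTo T B B := by
    intro w hw
    have h1 : T w ∈ closure (T '' Set.range fun k : ℕ => T^[k + (M + 1)] z) :=
      image_closure_subset_closure_image hT (Set.mem_image_of_mem T hw)
    refine closure_mono ?_ h1
    rintro _ ⟨_, ⟨k, rfl⟩, rfl⟩
    refine ⟨k + 1, ?_⟩
    show T^[k + 1 + (M + 1)] z = T (T^[k + (M + 1)] z)
    rw [← Function.iterate_succ_apply' T (k + (M + 1)) z]
    congr 1
    omega
  have hBeq := hz.2.2.2 B hBsub hBne isClosed_closure hBinv
  have hzB : z ∈ B := by rw [hBeq]; exact mem_orbitClosure_self T z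
  have := mem_closure_iff_nhds.mp hzB U hU
  obtain ⟨w, hwU, ⟨k, rfl⟩⟩ := this
  exact ⟨k + (M + 1), hwU, by omega⟩

end Ellis
namespace Ellis

variable {X : Type} [MetricSpace X] [CompactSpace X]

theorem imp14 {T : X → X} (hTc : Continuous T) {x : X} (hx : DistalPt T x) :
    ∀ U ∈ nhds x, IPStar (retTimes T x U) := by
  intro U hU B hB
  obtain ⟨p, hpos, hsub⟩ := hB
  obtain ⟨u, huidem, huFS⟩ := Hindman.exists_idempotent_ultrafilter_le_FS (p : Stream' ℕ)
  have hBu : B ∈ u := by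
    apply Filter.mem_of_superset huFS
    intro m hm
    obtain ⟨α, hne, hsum⟩ := hindman_subset_ourFS hm
    exact hsub ⟨α, hne, fun i _ => Nat.zero_le i, hsum⟩
  have hret : retTimes T x U ∈ u := by
    have hfix := distal_fix hTc hx huidem
    exact mem_of_act (by rw [hfix]; exact hU)
  exact Ultrafilter.nonempty_of_mem (Filter.inter_mem hret hBu)

theorem imp43 {T : X → X} (hTc : Continuous T) {x : X}
    (h4 : ∀ U ∈ nhds x, IPStar (retTimes T x U)) :
    ∀ (Y : Type) [MetricSpace Y] [CompactSpace Y] (S : Y → Y),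
      Continuous S → Function.Surjective S →
        ∀ y : Y, IsMinimalPt S y → IsMinimalPt (Prod.map T S) (x, y) := by
  intro Y _ _ S hSc _ y hy
  obtain ⟨L, u, hL, hmin, huL, huidem, hufix⟩ := exists_minIdem_fixing hSc hy
  have hxfix : act T x u = x := ipstar_fix h4 huidem
  have hprodfix : act (Prod.map T S) (x, y) u = (x, y) := by
    rw [act_prod, hxfix, hufix]
  exact minimal_of_fixed_minIdem (hTc.prodMap hSc) hL hmin huL hprodfix

theorem imp31 {T : X → X} (hTc : Continuous T) (hTs : Function.Surjective T) {x : X}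
    (h3 : ∀ (Y : Type) [MetricSpace Y] [CompactSpace Y] (S : Y → Y),
      Continuous S → Function.Surjective S →
        ∀ y : Y, IsMinimalPt S y → IsMinimalPt (Prod.map T S) (x, y)) :
    DistalPt T x := by
  have hRc : Continuous (Prod.map T T) := hTc.prodMap hTc
  -- Step A: x is a minimal point.
  have hxmin : IsMinimalPt T x := by
    obtain ⟨L, -, hL, hmin⟩ := exists_minimal_cli_subset isCLI_univ
    obtain ⟨u, huL, huidem⟩ := exists_idempotent_in_compact_add_subsemigroup
      Ultrafilter.continuous_add_left L hL.1 hL.2.1.isCompact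
      (fun p _ q hq => hL.2.2 p q hq)
    set z := act T x u with hz
    have hzfix : act T z u = z := act_idem_self hTc x huidem
    have hzmin : IsMinimalPt T z := minimal_of_fixed_minIdem hTc hL hmin huL hzfix
    have hpmin : IsMinimalPt (Prod.map T T) (x, z) := h3 X T hTc hTs z hzmin
    rw [isMinimalPt_iff hTc]
    intro w hw
    rw [orbitClosure_eq_range_act hTc] at hw
    obtain ⟨q, rfl⟩ := hw
    have h1 : (act T x q, act T z q) ∈ orbitClosure (Prod.map T T) (x, z) := by
      rw [← act_prod]
      exact act_mem_orbitClosure hRc (x, z) q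
    have h2 := (isMinimalPt_iff hRc (x, z)).mp hpmin _ h1
    rw [orbitClosure_eq_range_act hRc] at h2
    obtain ⟨r, hr⟩ := h2
    rw [act_prod] at hr
    rw [orbitClosure_eq_range_act hTc]
    exact ⟨r, congrArg Prod.fst hr⟩
  -- Step B: any point of the orbit closure of x is minimal.
  intro y hy hprox
  have hOeq : orbitClosure T y = orbitClosure T x := by
    apply hxmin.2.2.2 _ (orbitClosure_subset (orbitClosure_isClosed T x)
      (mapsTo_orbitClosure hTc x) hy) ⟨y, mem_orbitClosure_self T y⟩
      (orbitClosure_isClosed T y) (mapsTo_orbitClosure hTc y)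
  have hymin : IsMinimalPt T y := by
    unfold IsMinimalPt
    rw [hOeq]
    exact hxmin
  -- Step C: apply minimality of (x, y) and proximality.
  have hpmin : IsMinimalPt (Prod.map T T) (x, y) := h3 X T hTc hTs y hymin
  obtain ⟨p, hp⟩ := proximal_exists_ultra hprox
  set w := act T x p with hwdef
  have h1 : (w, w) ∈ orbitClosure (Prod.map T T) (x, y) := by
    have : (w, w) = act (Prod.map T T) (x, y) p := by
      rw [act_prod, ← hp]
    rw [this]
    exact act_mem_orbitClosure hRc (x, y) p
  have h2 : (x, y) ∈ orbitClosure (Prod.map T T) (w, w) := (isMinimalPt_iff hRc _).mp hpmin _ h1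
  have hdiag : orbitClosure (Prod.map T T) (w, w) ⊆ {q : X × X | q.1 = q.2} := by
    apply orbitClosure_subset
    · exact isClosed_diagonal
    · rintro ⟨a, b⟩ (hab : a = b)
      show T a = T b
      rw [hab]
    · rfl
  exact (hdiag h2).symm

theorem recurrent_FS {Y : Type} [MetricSpace Y] [CompactSpace Y] {S : Y → Y}
    (hS : Continuous S) {y : Y} (hy : RecurrentPt S y) {V : Set Y} (hV : V ∈ nhds y) :
    ∃ p : ℕ → ℕ, (∀ k, k + 1 ≤ p k) ∧
      ∀ α : Finset ℕ, α.Nonempty → S^[∑ i ∈ α, p i] y ∈ V := by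
  have hchoice : ∀ W : Set Y, IsOpen W → y ∈ W → ∀ k : ℕ,
      ∃ n : ℕ, k + 1 ≤ n ∧ S^[n] y ∈ W := by
    intro W hWo hWy k
    obtain ⟨n, hn1, hn2⟩ := (hy W (hWo.mem_nhds hWy)).exists_gt k
    exact ⟨n, by omega, hn1⟩
  let Wfun : ℕ → {W : Set Y // IsOpen W ∧ y ∈ W} := fun k =>
    Nat.rec ⟨interior V, isOpen_interior, mem_interior_iff_mem_nhds.mpr hV⟩
      (fun k prev =>
        ⟨prev.1 ∩ S^[(hchoice prev.1 prev.2.1 prev.2.2 k).choose] ⁻¹' prev.1,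
          prev.2.1.inter (prev.2.1.preimage (hS.iterate _)),
          ⟨prev.2.2, (hchoice prev.1 prev.2.1 prev.2.2 k).choose_spec.2⟩⟩) k
  let p : ℕ → ℕ := fun k => (hchoice (Wfun k).1 (Wfun k).2.1 (Wfun k).2.2 k).choose
  have hWsucc : ∀ k, (Wfun (k + 1)).1 = (Wfun k).1 ∩ S^[p k] ⁻¹' (Wfun k).1 := fun k => rfl
  have hp : ∀ k, k + 1 ≤ p k ∧ S^[ p k] y ∈ (Wfun k).1 := fun k =>
    (hchoice (Wfun k).1 (Wfun k).2.1 (Wfun k).2.2 k).choose_spec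
  have hC : ∀ k, ∀ α ⊆ Finset.range k, ∀ z ∈ (Wfun k).1,
      S^[∑ i ∈ α, p i] z ∈ interior V := by
    intro k
    induction k with
    | zero =>
      intro α hα z hz
      have hα0 : α = ∅ := Finset.subset_empty.mp (by simpa using hα)
      subst hα0
      simpa using (show z ∈ interior V from hz)
    | succ k ih =>
      intro α hα z hz
      rw [hWsucc k] at hz
      by_cases hk : k ∈ α
      · have hsum : ∑ i ∈ α, p i = (∑ i ∈ α.erase k, p i) + p k :=
          (Finset.sum_erase_add _ _ hk).symm
        rw [hsum, Function.iterate_add_apply]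
        refine ih (α.erase k) (fun i hi => ?_) _ hz.2
        have h1 := hα (Finset.mem_of_mem_erase hi)
        have h2 : i ≠ k := Finset.ne_of_mem_erase hi
        simp only [Finset.mem_range] at h1 ⊢
        omega
      · refine ih α (fun i hi => ?_) z hz.1
        have h1 := hα hi
        simp only [Finset.mem_range] at h1 ⊢
        rcases Nat.lt_succ_iff_lt_or_eq.mp h1 with h | h
        · exact h
        · exact absurd (h ▸ hi) hk
  refine ⟨p, fun k => (hp k).1, ?_⟩
  intro α hne
  have hmax : α ⊆ Finset.range (α.max' hne + 1) := fun i hi =>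
    Finset.mem_range.mpr (Nat.lt_succ_of_le (Finset.le_max' α i hi))
  exact interior_subset (hC (α.max' hne + 1) α hmax y (Wfun (α.max' hne + 1)).2.2)

theorem imp42 {T : X → X} (hTc : Continuous T) {x : X}
    (h4 : ∀ U ∈ nhds x, IPStar (retTimes T x U)) :
    ∀ (Y : Type) [MetricSpace Y] [CompactSpace Y] (S : Y → Y),
      Continuous S → Function.Surjective S →
        ∀ y : Y, RecurrentPt S y → RecurrentPt (Prod.map T S) (x, y) := by
  intro Y _ _ S hSc _ y hy W hW
  obtain ⟨U, hU, V, hV, hUV⟩ := mem_nhds_prod_iff.mp hW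
  obtain ⟨p, hp1, hp2⟩ := recurrent_FS hSc hy hV
  apply infinite_of_unbounded
  intro M
  set q : ℕ → ℕ := fun i => p (i + (M + 1)) with hq
  have hip : IPSet (FS q) := ⟨q, fun i => by show 0 < p (i + (M + 1)); have := hp1 (i + (M + 1)); omega, subset_rfl⟩
  obtain ⟨n, hn1, hn2⟩ := h4 U hU (FS q) hip
  obtain ⟨α, hαne, -, rfl⟩ := hn2
  obtain ⟨i₀, hi₀⟩ := hαne
  have hnM : M < ∑ i ∈ α, q i := by
    have h1 : q i₀ ≤ ∑ i ∈ α, q i :=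
      Finset.single_le_sum (fun i _ => Nat.zero_le (q i)) hi₀
    have h2 := hp1 (i₀ + (M + 1))
    have h3 : q i₀ = p (i₀ + (M + 1)) := rfl
    omega
  refine ⟨∑ i ∈ α, q i, ?_, hnM⟩
  show (Prod.map T S)^[∑ i ∈ α, q i] (x, y) ∈ W
  have hiter : (Prod.map T S)^[∑ i ∈ α, q i] (x, y)
      = (T^[∑ i ∈ α, q i] x, S^[∑ i ∈ α, q i] y) := by
    rw [Prod.map_iterate]; rfl
  rw [hiter]
  apply hUV
  constructor
  · exact hn1
  · have hsum : ∑ i ∈ α, q i = ∑ j ∈ α.image (· + (M + 1)), p j := by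
      rw [Finset.sum_image (fun a _ b _ h => by omega)]
    rw [hsum]
    exact hp2 _ ⟨i₀ + (M + 1), Finset.mem_image_of_mem _ hi₀⟩

end Ellis
namespace Ellis

/-- Extract a super-increasing sequence of block sums from a positive sequence. -/
theorem exists_superincreasing {p : ℕ → ℕ} (hp : ∀ i, 0 < p i) :
    ∃ q : ℕ → ℕ, (∀ j, (∑ i ∈ Finset.range j, q i) < q j) ∧ FS q ⊆ FS p := by
  let M : ℕ → ℕ := fun j => Nat.rec 0
    (fun _ Mj => Mj + (∑ i ∈ Finset.range Mj, p i) + 1) j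
  have hMsucc : ∀ j, M (j + 1) = M j + (∑ i ∈ Finset.range (M j), p i) + 1 := fun j => rfl
  have hMlt : ∀ j, M j < M (j + 1) := fun j => by rw [hMsucc]; omega
  have hMmono : StrictMono M := strictMono_nat_of_lt_succ hMlt
  set q : ℕ → ℕ := fun j => ∑ i ∈ Finset.Ico (M j) (M (j + 1)), p i with hqdef
  have htel : ∀ j, ∑ i ∈ Finset.range j, q i = ∑ i ∈ Finset.range (M j), p i := by
    intro j
    induction j with
    | zero => simp [show M 0 = 0 from rfl]
    | succ j ih =>
      rw [Finset.sum_range_succ, ih, Finset.range_eq_Ico,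
        show q j = ∑ i ∈ Finset.Ico (M j) (M (j + 1)), p i from rfl,
        Finset.sum_Ico_consecutive _ (Nat.zero_le (M j)) (le_of_lt (hMlt j)), Finset.range_eq_Ico]
  have hqbig : ∀ j, (∑ i ∈ Finset.range j, q i) < q j := by
    intro j
    rw [htel]
    have hcard : (Finset.Ico (M j) (M (j + 1))).card ≤ q j := by
      have := Finset.card_nsmul_le_sum (Finset.Ico (M j) (M (j + 1))) p 1
        (fun i _ => hp i)
      simpa using this
    rw [Nat.card_Ico, hMsucc] at hcard
    omega
  refine ⟨q, hqbig, ?_⟩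
  rintro _ ⟨γ, hγne, -, rfl⟩
  have hdisj : ∀ j₁ ∈ γ, ∀ j₂ ∈ γ, j₁ ≠ j₂ →
      Disjoint (Finset.Ico (M j₁) (M (j₁ + 1))) (Finset.Ico (M j₂) (M (j₂ + 1))) := by
    intro j₁ _ j₂ _ hne
    rcases Nat.lt_or_ge j₁ j₂ with h | h
    · exact (Finset.Ico_disjoint_Ico_consecutive (M j₁) (M (j₁ + 1)) (M (j₂ + 1))).mono_right
        (Finset.Ico_subset_Ico (hMmono.le_iff_le.mpr (show j₁ + 1 ≤ j₂ from h)) le_rfl)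
    · have h2 : j₂ < j₁ := by omega
      exact ((Finset.Ico_disjoint_Ico_consecutive (M j₂) (M (j₂ + 1)) (M (j₁ + 1))).mono_right
        (Finset.Ico_subset_Ico (hMmono.le_iff_le.mpr (show j₂ + 1 ≤ j₁ from h2)) le_rfl)).symm
  refine ⟨γ.biUnion (fun j => Finset.Ico (M j) (M (j + 1))), ?_, fun i _ => Nat.zero_le i, ?_⟩
  · obtain ⟨j, hj⟩ := hγne
    exact ⟨M j, Finset.mem_biUnion.mpr ⟨j, hj, Finset.mem_Ico.mpr ⟨le_rfl, hMlt j⟩⟩⟩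
  · rw [Finset.sum_biUnion hdisj]

theorem si_pos {q : ℕ → ℕ} (hSI : ∀ j, (∑ i ∈ Finset.range j, q i) < q j) (j : ℕ) :
    0 < q j := lt_of_le_of_lt (Nat.zero_le _) (hSI j)

theorem si_shift {q : ℕ → ℕ} (hSI : ∀ j, (∑ i ∈ Finset.range j, q i) < q j)
    {m k i : ℕ} (hik : i < k) (hk : k ≤ ∑ j ∈ Finset.range m, q j) :
    (i ∈ FS q ∪ {0}) ↔ (q m + i ∈ FS q ∪ {0}) := by
  constructor
  · rintro (hi | hi0)
    · obtain ⟨α, hαne, -, rfl⟩ := hi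
      have hmα : m ∉ α := by
        intro hm
        have h1 : q m ≤ ∑ j ∈ α, q j :=
          Finset.single_le_sum (fun j _ => Nat.zero_le (q j)) hm
        have h2 := hSI m
        omega
      left
      refine ⟨insert m α, Finset.insert_nonempty _ _, fun j _ => Nat.zero_le j, ?_⟩
      rw [Finset.sum_insert hmα]
    · simp only [Set.mem_singleton_iff] at hi0
      subst hi0
      left
      exact ⟨{m}, Finset.singleton_nonempty m, fun j _ => Nat.zero_le j, by simp⟩
  · rintro (hqm | h0)
    · obtain ⟨γ, hγne, -, heq⟩ := hqm
      set t := γ.max' hγne with ht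
      have htγ : t ∈ γ := γ.max'_mem hγne
      have hsub : ∀ s : ℕ, (∀ j ∈ γ, j < s) → ∑ j ∈ γ, q j ≤ ∑ j ∈ Finset.range s, q j :=
        fun s hs => Finset.sum_le_sum_of_subset (fun j hj => Finset.mem_range.mpr (hs j hj))
      have hqt : q t ≤ ∑ j ∈ γ, q j := Finset.single_le_sum (fun j _ => Nat.zero_le (q j)) htγ
      rcases Nat.lt_trichotomy t m with hlt | heqm | hgt
      · exfalso
        have h1 : ∑ j ∈ γ, q j ≤ ∑ j ∈ Finset.range m, q j :=
          hsub m (fun j hj => lt_of_le_of_lt (γ.le_max' j hj) hlt)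
        have h2 := hSI m
        omega
      · subst heqm
        have h1 : ∑ j ∈ γ, q j = (∑ j ∈ γ.erase t, q j) + q t :=
          (Finset.sum_erase_add _ _ htγ).symm
        have h2 : i = ∑ j ∈ γ.erase t, q j := by omega
        rcases (γ.erase t).eq_empty_or_nonempty with hemp | hne2
        · right
          simp only [Set.mem_singleton_iff]
          rw [h2, hemp, Finset.sum_empty]
        · left
          exact ⟨γ.erase t, hne2, fun j _ => Nat.zero_le j, h2⟩
      · exfalso
        have h1 := hSI t
        have h2 : ∑ j ∈ Finset.range (m + 1), q j ≤ ∑ j ∈ Finset.range t, q j :=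
          Finset.sum_le_sum_of_subset (Finset.range_subset_range.mpr (by omega))
        rw [Finset.sum_range_succ] at h2
        omega
    · exfalso
      simp only [Set.mem_singleton_iff] at h0
      have := si_pos hSI m
      omega

end Ellis
namespace Ellis

variable {X : Type} [MetricSpace X] [CompactSpace X]

theorem imp24 {T : X → X} {x : X}
    (h2 : ∀ (Y : Type) [MetricSpace Y] [CompactSpace Y] (S : Y → Y),
      Continuous S → Function.Surjective S →
        ∀ y : Y, RecurrentPt S y → RecurrentPt (Prod.map T S) (x, y)) :
    ∀ U ∈ nhds x, IPStar (retTimes T x U) := by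
  classical
  intro U hU B hB
  obtain ⟨p, hppos, hpsub⟩ := hB
  obtain ⟨q, hSI, hFSsub⟩ := exists_superincreasing hppos
  let Y := ℕ → Bool
  letI : MetricSpace Y := PiNat.metricSpace
  haveI hcmp : CompactSpace Y := by
    constructor
    exact (CompactSpace.isCompact_univ : @IsCompact Y Pi.topologicalSpace Set.univ)
  let S : Y → Y := fun w n => w (n + 1)
  have hSc : Continuous S := by
    apply continuous_pi
    intro i
    exact continuous_apply (i + 1)
  have hSs : Function.Surjective S := by
    intro w
    refine ⟨fun n => Nat.rec true (fun k _ => w k) n, ?_⟩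
    funext i
    rfl
  have hcyl : ∀ (y : Y) (W : Set Y), W ∈ nhds y → ∃ k, PiNat.cylinder y k ⊆ W := by
    intro y W hW
    obtain ⟨O, hOW, hOopen, hyO⟩ := mem_nhds_iff.mp hW
    have hbasis := PiNat.isTopologicalBasis_cylinders (fun _ : ℕ => Bool)
    obtain ⟨C, hC, hyC, hCO⟩ := hbasis.exists_subset_of_mem_open hyO hOopen
    obtain ⟨z, k, rfl⟩ := hC
    refine ⟨k, ?_⟩
    rw [PiNat.mem_cylinder_iff_eq.mp hyC]
    exact hCO.trans hOW
  have hVopen : IsOpen {w : Y | w 0 = true} := by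
    have hc : Continuous (fun w : Y => w 0) := continuous_apply 0
    exact (isOpen_discrete {true}).preimage hc
  have hiter : ∀ (n : ℕ) (w : Y) (i : ℕ), S^[n] w i = w (i + n) := by
    intro n
    induction n with
    | zero => intro w i; rfl
    | succ n ih =>
      intro w i
      rw [Function.iterate_succ_apply, ih (S w) i]
      show w (i + n + 1) = w (i + (n + 1))
      congr 1
  set E : Set ℕ := FS q ∪ {0} with hE
  let y0 : Y := fun n => if n ∈ E then true else false
  have hy0 : ∀ n, y0 n = true ↔ n ∈ E := by
    intro n
    by_cases h : n ∈ E <;> simp [y0, h]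
  have hsum_ge : ∀ m : ℕ, m ≤ ∑ j ∈ Finset.range m, q j := by
    intro m
    have h1 := Finset.card_nsmul_le_sum (Finset.range m) q 1 (fun j _ => si_pos hSI j)
    simpa using h1
  have hkey : ∀ m k i : ℕ, i < k → k ≤ ∑ j ∈ Finset.range m, q j →
      y0 (q m + i) = y0 i := by
    intro m k i hik hk
    have hiff := si_shift hSI hik hk
    by_cases h : i ∈ E
    · rw [(hy0 _).mpr (hiff.mp h), (hy0 _).mpr h]
    · have h2 : q m + i ∉ E := fun hc => h (hiff.mpr hc)
      simp only [y0, if_neg h, if_neg h2]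
  have hrec : RecurrentPt S y0 := by
    intro W hW
    obtain ⟨k, hkcyl⟩ := hcyl y0 W hW
    apply infinite_of_unbounded
    intro Mb
    set m := max (max k 1) (Mb + 1) with hm
    have h1 : k ≤ ∑ j ∈ Finset.range m, q j :=
      le_trans (le_trans (le_max_left k 1) (le_max_left _ _)) (hsum_ge m)
    refine ⟨q m, ?_, ?_⟩
    · show S^[q m] y0 ∈ W
      apply hkcyl
      rw [PiNat.mem_cylinder_iff]
      intro i hik
      rw [hiter (q m) y0 i, show i + q m = q m + i by omega]
      exact hkey m k i hik h1
    · have h2 := hSI m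
      have h3 := hsum_ge m
      have h4 : Mb + 1 ≤ m := le_max_right _ _
      omega
  have hprodrec := h2 Y S hSc hSs y0 hrec
  have hVy0 : {w : Y | w 0 = true} ∈ nhds y0 := by
    apply hVopen.mem_nhds
    rw [Set.mem_setOf_eq, hy0]
    right
    rfl
  have hWmem : (U ×ˢ {w : Y | w 0 = true}) ∈ nhds (x, y0) := prod_mem_nhds hU hVy0
  obtain ⟨n, hn, hnpos⟩ := (hprodrec _ hWmem).exists_gt 0
  have hmem : (Prod.map T S)^[n] (x, y0) ∈ U ×ˢ {w : Y | w 0 = true} := hn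
  rw [Prod.map_iterate] at hmem
  obtain ⟨hU1, hV1⟩ := hmem
  have h5 : y0 n = true := by
    have h6 : S^[n] y0 0 = true := hV1
    rwa [hiter n y0 0, Nat.zero_add] at h6
  have h7 : n ∈ E := (hy0 n).mp h5
  have h8 : n ∈ FS q := by
    rcases h7 with h | h
    · exact h
    · exact absurd h (by simpa using Nat.pos_iff_ne_zero.mp hnpos)
  exact ⟨n, hU1, hpsub (hFSsub h8)⟩

end Ellis
/-- equivalence of distality, product recurrence, minimality of products with
minimal points, and IP*-recurrence. -/
theorem statement_4 {X : Type} [MetricSpace X] [CompactSpace X] (T : X → X)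
    (hTc : Continuous T) (hTs : Function.Surjective T) (x : X) :
    List.TFAE [
      DistalPt T x,
      ∀ (Y : Type) [MetricSpace Y] [CompactSpace Y] (S : Y → Y),
        Continuous S → Function.Surjective S →
          ∀ y : Y, RecurrentPt S y → RecurrentPt (Prod.map T S) (x, y),
      ∀ (Y : Type) [MetricSpace Y] [CompactSpace Y] (S : Y → Y),
        Continuous S → Function.Surjective S →
          ∀ y : Y, IsMinimalPt S y → IsMinimalPt (Prod.map T S) (x, y),
      ∀ U ∈ nhds x, IPStar (retTimes T x U)] := by
  tfae_have 1 → 4 := fun h => Ellis.imp14 hTc h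
  tfae_have 4 → 3 := fun h => Ellis.imp43 hTc h
  tfae_have 3 → 1 := fun h => Ellis.imp31 hTc hTs h
  tfae_have 4 → 2 := fun h => Ellis.imp42 hTc h
  tfae_have 2 → 4 := fun h => Ellis.imp24 h
  tfae_finish

end PaperFormal
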